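/- Let ℂ and 𝔾 be stratified L-convex structures on X and Y respectively and f : X → Y. Then f is L-convexity-preserving (i.e., f←(A) ∈ ℂ for all A ∈ 𝔾) if and only if for every x ∈ X, every nonzero coprime a ∈ L, and every A : Y → L with A in the L-convex remote-neighborhood system of (f x)_a, the preimage f←(A) lies in the L-convex remote-neighborhood system of x_a. -/
import Mathlib

open scoped Classical

variable {L X Y : Type*}

def IsLConvex [CompleteLattice L] (𝒞 : Set (X → L)) : Prop :=
  (fun _ => (⊤ : L)) ∈ 𝒞 ∧ (fun _ => (⊥ : L)) ∈ 𝒞 ∧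
  (∀ S : Set (X → L), S ⊆ 𝒞 → sInf S ∈ 𝒞) ∧
  (∀ S : Set (X → L), S ⊆ 𝒞 → DirectedOn (· ≤ ·) S → sSup S ∈ 𝒞)

def IsStratified [CompleteLattice L] (𝒞 : Set (X → L)) : Prop :=
  ∀ a : L, (fun _ => a) ∈ 𝒞

def LCP [CompleteLattice L] (f : X → Y) (𝒞 : Set (X → L)) (𝔾 : Set (Y → L)) : Prop :=
  ∀ A ∈ 𝔾, (A ∘ f) ∈ 𝒞

noncomputable def fpoint [CompleteLattice L] (x : X) (a : L) : X → L :=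
  fun u => if u = x then a else ⊥

/-- The L-convex remote-neighborhood system of the point `x_a`, for involution `c`. -/
def RN [CompleteLattice L] (𝒞 : Set (X → L)) (c : L → L) (x : X) (a : L) : Set (X → L) :=
  {A | ∃ C ∈ 𝒞, fpoint x a ≤ (fun u => c (C u)) ∧ (fun u => c (C u)) ≤ (fun u => c (A u))}

/-- nonzero coprime element -/
def IsCoprimeElt [CompleteLattice L] (a : L) : Prop :=
  a ≠ ⊥ ∧ ∀ b c : L, a ≤ b ⊔ c → a ≤ b ∨ a ≤ c

/-- `w` is totally above `v`. -/
def TotAbove [CompleteLattice L] (w v : L) : Prop :=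
  ∀ S : Set L, sInf S ≤ v → ∃ s ∈ S, s ≤ w

lemma sInf_totAbove_le [CompletelyDistribLattice L] (v : L) :
    sInf {w | TotAbove w v} ≤ v := by
  have h1 : ∀ g : ∀ S : {S : Set L // sInf S ≤ v}, S.1,
      TotAbove (⨆ S, ((g S : L))) v := by
    intro g T hT
    exact ⟨g ⟨T, hT⟩, (g ⟨T, hT⟩).2, le_iSup (fun S => ((g S : L))) ⟨T, hT⟩⟩
  have h2 : sInf {w | TotAbove w v} ≤
      ⨅ g : ∀ S : {S : Set L // sInf S ≤ v}, S.1, ⨆ S, ((g S : L)) :=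
    le_iInf fun g => sInf_le (h1 g)
  refine h2.trans ?_
  rw [← iSup_iInf_eq]
  refine iSup_le fun S => ?_
  refine le_trans (le_of_eq ?_) S.2
  exact (sInf_eq_iInf' S.1).symm

lemma exists_totAbove [CompletelyDistribLattice L] {u v : L} (h : ¬ u ≤ v) :
    ∃ w, TotAbove w v ∧ ¬ u ≤ w := by
  by_contra hc
  push_neg at hc
  exact h (le_trans (le_sInf fun w hw => hc w hw) (sInf_totAbove_le v))

lemma exists_coprime_of_not_le [CompletelyDistribLattice L] {u v : L} (h : ¬ u ≤ v) :
    ∃ p, IsCoprimeElt p ∧ p ≤ u ∧ ¬ p ≤ v := by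
  classical
  have step : ∀ t : {t : L // ¬ u ≤ t}, ∃ w : {t : L // ¬ u ≤ t}, TotAbove w.1 t.1 := by
    intro t
    obtain ⟨w, hw1, hw2⟩ := exists_totAbove t.2
    exact ⟨⟨w, hw2⟩, hw1⟩
  choose F hF using step
  let W : ℕ → {t : L // ¬ u ≤ t} := fun n => Nat.rec ⟨v, h⟩ (fun _ p => F p) n
  have hWs : ∀ n, TotAbove (W (n + 1)).1 (W n).1 := fun n => hF (W n)
  have hWmono : Monotone fun n => (W n).1 := by
    refine monotone_nat_of_le_succ fun n => ?_
    obtain ⟨s, hs, hsle⟩ := hWs n {(W n).1} (by simp)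
    rw [Set.mem_singleton_iff] at hs
    rwa [hs] at hsle
  set I : Set L := {z | ∃ n, z ≤ (W n).1} with hIdef
  have hvI : v ∈ I := ⟨0, le_refl _⟩
  have hbot : (⊥ : L) ∈ I := ⟨0, bot_le⟩
  have hdown : ∀ {z z' : L}, z ≤ z' → z' ∈ I → z ∈ I := by
    rintro z z' hzz ⟨n, hn⟩; exact ⟨n, hzz.trans hn⟩
  have huI : u ∉ I := by rintro ⟨n, hn⟩; exact (W n).2 hn
  set P : Set L := {z | z ≤ u ∧ z ∉ I} with hPdef
  have hInfP : ∀ C : Set L, C ⊆ P → C.Nonempty → sInf C ∈ P := by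
    intro C hCP ⟨y, hy⟩
    refine ⟨(sInf_le hy).trans (hCP hy).1, ?_⟩
    rintro ⟨n, hn⟩
    obtain ⟨s, hsC, hsle⟩ := hWs n C hn
    exact (hCP hsC).2 ⟨n + 1, hsle⟩
  obtain ⟨z, hzu, hzP, hzmin⟩ :
      ∃ z, z ≤ u ∧ z ∈ P ∧ ∀ y ∈ P, y ≤ z → z ≤ y := by
    obtain ⟨m, hum, hm⟩ := zorn_le_nonempty₀ (α := Lᵒᵈ) P
      (fun c hcP hc y hy => ⟨sInf (α := L) c, hInfP c hcP ⟨y, hy⟩,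
        fun z hz => show sInf (α := L) c ≤ z from sInf_le hz⟩)
      u ⟨le_refl u, huI⟩
    exact ⟨m, hum, hm.1, fun y hy hyz => hm.2 hy hyz⟩
  refine ⟨z, ⟨?_, ?_⟩, hzu, ?_⟩
  · rintro rfl; exact hzP.2 hbot
  · intro s t hst
    by_contra hcon
    push_neg at hcon
    obtain ⟨hzs, hzt⟩ := hcon
    have h1 : z ⊓ s ∈ I := by
      by_contra hzsI
      have : z ⊓ s ∈ P := ⟨inf_le_left.trans hzu, hzsI⟩
      exact hzs (le_inf_iff.1 (hzmin _ this inf_le_left)).2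
    have h2 : z ⊓ t ∈ I := by
      by_contra hztI
      have : z ⊓ t ∈ P := ⟨inf_le_left.trans hzu, hztI⟩
      exact hzt (le_inf_iff.1 (hzmin _ this inf_le_left)).2
    obtain ⟨m, hm⟩ := h1
    obtain ⟨n, hn⟩ := h2
    have : z ≤ (W (max m n)).1 := by
      have hz : z = z ⊓ s ⊔ z ⊓ t := by
        rw [← inf_sup_left, inf_eq_left.2 hst]
      rw [hz]
      exact sup_le (hm.trans (hWmono (le_max_left m n)))
        (hn.trans (hWmono (le_max_right m n)))
    exact hzP.2 ⟨max m n, this⟩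
  · intro hzv; exact hzP.2 (hdown hzv hvI)

lemma le_of_coprime_le [CompletelyDistribLattice L] {u v : L}
    (h : ∀ p : L, IsCoprimeElt p → p ≤ u → p ≤ v) : u ≤ v := by
  by_contra hc
  obtain ⟨p, hp, hpu, hpv⟩ := exists_coprime_of_not_le hc
  exact hpv (h p hp hpu)

theorem lcp_iff_remote [CompletelyDistribLattice L] (c : L → L)
    (hcA : Antitone c) (hci : Function.Involutive c)
    (f : X → Y) (𝒞 : Set (X → L)) (𝔾 : Set (Y → L))
    (h𝒞 : IsLConvex 𝒞) (hs𝒞 : IsStratified 𝒞)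
    (h𝔾 : IsLConvex 𝔾) (hs𝔾 : IsStratified 𝔾) :
    LCP f 𝒞 𝔾 ↔
      ∀ (x : X) (a : L), IsCoprimeElt a →
        ∀ A ∈ RN 𝔾 c (f x) a, (A ∘ f) ∈ RN 𝒞 c x a := by
  have hcle : ∀ {a b : L}, c b ≤ c a ↔ a ≤ b := by
    intro a b
    constructor
    · intro h'
      have := hcA h'
      rwa [hci, hci] at this
    · exact fun h' => hcA h'
  constructor
  · intro hf x a _ A hA
    obtain ⟨C, hC, h1, h2⟩ := hA
    refine ⟨C ∘ f, hf C hC, ?_, ?_⟩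
    · intro u
      by_cases hu : u = x
      · subst hu
        have h1x := h1 (f u)
        simp only [fpoint, if_pos rfl] at h1x ⊢
        exact h1x
      · simp [fpoint, hu]
    · intro u
      exact h2 (f u)
  · intro h A hA
    set S : Set (X → L) := {D | D ∈ 𝒞 ∧ A ∘ f ≤ D} with hSdef
    have hSsub : S ⊆ 𝒞 := fun D hD => hD.1
    have hE : sInf S ∈ 𝒞 := h𝒞.2.2.1 S hSsub
    have hle : A ∘ f ≤ sInf S := le_sInf fun D hD => hD.2
    have hge : sInf S ≤ A ∘ f := by
      intro x
      rw [← hcle]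
      refine le_of_coprime_le fun p hp hpA => ?_
      have hARN : A ∈ RN 𝔾 c (f x) p := by
        refine ⟨A, hA, ?_, le_refl _⟩
        intro u
        by_cases hu : u = f x
        · subst hu
          simpa [fpoint] using hpA
        · simp [fpoint, hu]
      obtain ⟨D, hD, g1, g2⟩ := h x p hp A hARN
      have hDS : D ∈ S := ⟨hD, fun u => hcle.1 (g2 u)⟩
      have hpD : p ≤ c (D x) := by
        have := g1 x
        simpa [fpoint] using this
      refine hpD.trans (hcA ?_)
      exact (sInf_le hDS : sInf S ≤ D) x
    have : A ∘ f = sInf S := le_antisymm hle hge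
    rw [this]
    exact hE
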